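/- Let $\mu>0$, $\sigma\neq 0$, $\gamma\in[1/2,1)$, $T>0$. The infimum, over all $\theta\in(0,T]$ and measurable $w:[0,\theta)\to\mathbb{R}$ with $\int_0^{\theta} e^{-\mu(1-\gamma)s}w_s\,ds = -\frac{1}{\sigma(1-\gamma)}$, of $\frac{1}{2}\int_0^{\theta}w_s^2\,ds$ equals $\frac{\mu}{\sigma^2(1-\gamma)(1-e^{-2\mu(1-\gamma)T})}$, and this equals $\frac{1}{2\langle M\rangle_T}$ where $\langle M\rangle_T = \int_0^T\sigma^2(1-\gamma)^2 e^{-2(1-\gamma)\mu s}\,ds$. -/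

import Mathlib

open Real MeasureTheory

set_option maxHeartbeats 1000000

lemma integral_exp_mul_aux (b t : ℝ) (hb : b ≠ 0) :
    ∫ s in (0:ℝ)..t, Real.exp (b*s) = (Real.exp (b*t) - 1)/b := by
  have h : ∀ x ∈ Set.uIcc (0:ℝ) t, HasDerivAt (fun s => Real.exp (b*s)/b) (Real.exp (b*x)) x := by
    intro x _
    have h1 : HasDerivAt (fun s => Real.exp (b*s)) (Real.exp (b*x) * b) x := by
      have := (Real.hasDerivAt_exp (b*x)).comp x ((hasDerivAt_id x).const_mul b)
      simpa [mul_comm, Function.comp_def] using this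
    have := h1.div_const b
    simpa [mul_div_assoc, mul_div_cancel_right₀ _ hb] using this
  rw [intervalIntegral.integral_eq_sub_of_hasDerivAt h
    (((Real.continuous_exp.comp (continuous_const.mul continuous_id)).intervalIntegrable 0 t))]
  simp [mul_comm]
  ring

theorem optimal_control_infimum (μ σ γ T : ℝ) (hμ : 0 < μ) (hσ : σ ≠ 0)
    (hγ : γ ∈ Set.Ico (1/2 : ℝ) 1) (hT : 0 < T) :
    sInf {x : ℝ | ∃ θ : ℝ, 0 < θ ∧ θ ≤ T ∧ ∃ w : ℝ → ℝ, Measurable w ∧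
        IntervalIntegrable (fun s => (w s)^2) volume 0 θ ∧
        (∫ s in (0:ℝ)..θ, Real.exp (-μ*(1-γ)*s) * w s) = -1/(σ*(1-γ)) ∧
        x = (1/2) * ∫ s in (0:ℝ)..θ, (w s)^2}
      = μ / (σ^2*(1-γ)*(1 - Real.exp (-2*μ*(1-γ)*T)))
    ∧ μ / (σ^2*(1-γ)*(1 - Real.exp (-2*μ*(1-γ)*T)))
      = 1 / (2 * ∫ s in (0:ℝ)..T, σ^2*(1-γ)^2 * Real.exp (-2*(1-γ)*μ*s)) := by
  have hg : 0 < 1 - γ := by linarith [hγ.2]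
  have hb : (-2*μ*(1-γ)) ≠ 0 := by positivity
  have hpos2 : (0:ℝ) < 2*μ*(1-γ) := by positivity
  -- basic integral computation
  have Iexp : ∀ t : ℝ, ∫ s in (0:ℝ)..t, Real.exp (-2*μ*(1-γ)*s)
      = (1 - Real.exp (-2*μ*(1-γ)*t))/(2*μ*(1-γ)) := by
    intro t
    rw [integral_exp_mul_aux _ _ hb]
    field_simp
    ring
  set E := Real.exp (-2*μ*(1-γ)*T) with hEdef
  have hE1 : E < 1 := by
    rw [hEdef]
    apply Real.exp_lt_one_iff.mpr
    nlinarith [mul_pos hpos2 hT]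
  have hEne : (1:ℝ) - E ≠ 0 := by linarith
  set IT : ℝ := (1 - E)/(2*μ*(1-γ)) with hITdef
  have hITpos : 0 < IT := div_pos (by linarith) hpos2
  set c : ℝ := -1/(σ*(1-γ)) with hcdef
  have hcne : c ≠ 0 := by
    rw [hcdef]
    exact div_ne_zero (by norm_num) (mul_ne_zero hσ (by linarith))
  set lam : ℝ := c / IT with hlamdef
  set V : ℝ := μ / (σ^2*(1-γ)*(1 - E)) with hVdef
  have hgne : (1:ℝ) - γ ≠ 0 := ne_of_gt hg
  have hμne : μ ≠ 0 := ne_of_gt hμ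
  -- the key algebraic identity
  have hVeq : V = lam * c - lam^2/2 * IT := by
    rw [hVdef, hlamdef, hcdef, hITdef]
    field_simp
    ring
  -- membership
  have hmem : V ∈ {x : ℝ | ∃ θ : ℝ, 0 < θ ∧ θ ≤ T ∧ ∃ w : ℝ → ℝ, Measurable w ∧
        IntervalIntegrable (fun s => (w s)^2) volume 0 θ ∧
        (∫ s in (0:ℝ)..θ, Real.exp (-μ*(1-γ)*s) * w s) = -1/(σ*(1-γ)) ∧
        x = (1/2) * ∫ s in (0:ℝ)..θ, (w s)^2} := by
    have hwcont : Continuous (fun s : ℝ => lam * Real.exp (-μ*(1-γ)*s)) :=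
      continuous_const.mul (Real.continuous_exp.comp (continuous_const.mul continuous_id))
    refine ⟨T, hT, le_refl T, fun s => lam * Real.exp (-μ*(1-γ)*s), hwcont.measurable, ?_, ?_, ?_⟩
    · exact (hwcont.pow 2).intervalIntegrable 0 T
    · have heq : (fun s => Real.exp (-μ*(1-γ)*s) * (lam * Real.exp (-μ*(1-γ)*s)))
          = fun s => lam * Real.exp (-2*μ*(1-γ)*s) := by
        funext s
        rw [show (-2*μ*(1-γ)*s) = (-μ*(1-γ)*s) + (-μ*(1-γ)*s) by ring, Real.exp_add]
        ring
      rw [heq, intervalIntegral.integral_const_mul, Iexp T, ← hEdef, ← hITdef, hlamdef,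
        div_mul_cancel₀ _ (ne_of_gt hITpos), hcdef]
    · have heq : (fun s => (lam * Real.exp (-μ*(1-γ)*s))^2)
          = fun s => lam^2 * Real.exp (-2*μ*(1-γ)*s) := by
        funext s
        rw [mul_pow, sq (Real.exp _), ← Real.exp_add,
          show (-μ*(1-γ)*s) + (-μ*(1-γ)*s) = (-2*μ*(1-γ)*s) by ring]
      rw [heq, intervalIntegral.integral_const_mul, Iexp T, ← hEdef, ← hITdef,
        hVeq, hlamdef]
      field_simp
      ring
  -- lower bound
  have hlb : ∀ x ∈ {x : ℝ | ∃ θ : ℝ, 0 < θ ∧ θ ≤ T ∧ ∃ w : ℝ → ℝ, Measurable w ∧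
        IntervalIntegrable (fun s => (w s)^2) volume 0 θ ∧
        (∫ s in (0:ℝ)..θ, Real.exp (-μ*(1-γ)*s) * w s) = -1/(σ*(1-γ)) ∧
        x = (1/2) * ∫ s in (0:ℝ)..θ, (w s)^2}, V ≤ x := by
    rintro x ⟨θ, hθ0, hθT, w, hwm, hw2, hcon, hxval⟩
    rw [← hcdef] at hcon
    -- integrability of the constraint integrand
    have hew : IntervalIntegrable (fun s => Real.exp (-μ*(1-γ)*s) * w s) volume 0 θ := by
      by_contra h
      rw [intervalIntegral.integral_undef h] at hcon
      exact hcne hcon.symm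
    have hexp2 : Continuous (fun s : ℝ => Real.exp (-2*μ*(1-γ)*s)) :=
      Real.continuous_exp.comp (continuous_const.mul continuous_id)
    -- pointwise inequality
    have hpt : ∀ s ∈ Set.Icc 0 θ,
        lam * (Real.exp (-μ*(1-γ)*s) * w s)
          ≤ (1/2)*(w s)^2 + (lam^2/2)*Real.exp (-2*μ*(1-γ)*s) := by
      intro s _
      have hu2 : Real.exp (-2*μ*(1-γ)*s) = (Real.exp (-μ*(1-γ)*s))^2 := by
        rw [sq, ← Real.exp_add]
        congr 1
        ring
      rw [hu2]
      nlinarith [sq_nonneg (w s - lam * Real.exp (-μ*(1-γ)*s))]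
    have hInt1 : IntervalIntegrable (fun s => lam * (Real.exp (-μ*(1-γ)*s) * w s)) volume 0 θ :=
      hew.const_mul lam
    have hIntA : IntervalIntegrable (fun s => (1/2)*(w s)^2) volume 0 θ := hw2.const_mul _
    have hIntB : IntervalIntegrable (fun s => (lam^2/2)*Real.exp (-2*μ*(1-γ)*s)) volume 0 θ :=
      (hexp2.intervalIntegrable 0 θ).const_mul _
    have hmono := intervalIntegral.integral_mono_on hθ0.le hInt1 (hIntA.add hIntB) hpt
    rw [intervalIntegral.integral_const_mul, hcon,
      intervalIntegral.integral_add hIntA hIntB,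
      intervalIntegral.integral_const_mul, intervalIntegral.integral_const_mul, Iexp θ] at hmono
    -- monotonicity of I in θ
    have hIle : (1 - Real.exp (-2*μ*(1-γ)*θ))/(2*μ*(1-γ)) ≤ IT := by
      rw [hITdef, hEdef, div_le_div_iff_of_pos_right hpos2]
      have h2 : Real.exp (-2*μ*(1-γ)*T) ≤ Real.exp (-2*μ*(1-γ)*θ) := by
        apply Real.exp_le_exp.mpr
        nlinarith [mul_le_mul_of_nonneg_left hθT (le_of_lt hpos2)]
      linarith
    have hstep := mul_le_mul_of_nonneg_left hIle (by positivity : (0:ℝ) ≤ lam^2/2)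
    rw [hVeq]
    linarith [hmono, hstep, hxval.ge, hxval.le]
  constructor
  · exact le_antisymm (csInf_le ⟨V, hlb⟩ hmem) (le_csInf ⟨V, hmem⟩ hlb)
  · have heq : (fun s : ℝ => σ^2*(1-γ)^2 * Real.exp (-2*(1-γ)*μ*s))
        = fun s => σ^2*(1-γ)^2 * Real.exp (-2*μ*(1-γ)*s) := by
      funext s
      congr 2
      ring
    rw [heq, intervalIntegral.integral_const_mul, Iexp T, ← hEdef, hVdef]
    field_simp
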